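/- Let A ∈ F_{q^3} satisfy N(A) = 1 and A ≠ 1, where N(A) = A^{1+q+q^2}. Then A_1 := (A^{q+1} − 1)/(1 − A^q) is a root of h_1(X) = X^{q+1} + X + 1. (In particular 1 − A^q ≠ 0.) -/

import Mathlib

theorem stmt_5 (q : ℕ) (hq : IsPrimePow q)
    (F : Type) [Field F] [Fintype F] (hcard : Fintype.card F = q ^ 3)
    (A : F) (hA : A ^ (1 + q + q ^ 2) = 1) (hA1 : A ≠ 1) :
    1 - A ^ q ≠ 0 ∧
    ((A ^ (q + 1) - 1) / (1 - A ^ q)) ^ (q + 1) +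
      (A ^ (q + 1) - 1) / (1 - A ^ q) + 1 = 0 := by
  obtain ⟨p, k, hp, hk, rfl⟩ := hq
  have hpp : p.Prime := Nat.prime_iff.mpr hp
  haveI : Fact p.Prime := ⟨hpp⟩
  haveI : CharP F (ringChar F) := ringChar.charP F
  obtain ⟨n, hp', hcard'⟩ := FiniteField.card F (ringChar F)
  have hdvd : ringChar F ∣ p ^ (3 * k) := by
    rw [← pow_mul, mul_comm] at hcard
    rw [hcard] at hcard'
    exact hcard' ▸ dvd_pow_self (ringChar F) n.pos.ne'
  have hchar : ringChar F = p := (Nat.prime_dvd_prime_iff_eq hp' hpp).mp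
    (hp'.dvd_of_dvd_pow hdvd)
  haveI : CharP F p := hchar ▸ ringChar.charP F
  have frob : ∀ x y : F, (x - y) ^ p ^ k = x ^ p ^ k - y ^ p ^ k :=
    fun x y => sub_pow_char_pow x y k
  have hq0 : p ^ k ≠ 0 := pow_ne_zero k hpp.pos.ne'
  rw [pow_add, pow_add, pow_one, pow_two, pow_mul] at hA
  -- hA : A * A ^ p ^ k * (A ^ p ^ k) ^ p ^ k = 1
  have hva : 1 - A ^ p ^ k ≠ 0 := by
    intro h
    have h1 : A ^ p ^ k = 1 := by linear_combination -h
    have h2 : (A - 1) ^ p ^ k = 0 := by rw [frob, one_pow, h1, sub_self]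
    exact hA1 (by have := pow_eq_zero_iff hq0 |>.mp h2; linear_combination this)
  have hvb : 1 - (A ^ p ^ k) ^ p ^ k ≠ 0 := by
    intro h
    have h1 : (A ^ p ^ k) ^ p ^ k = 1 := by linear_combination -h
    have h2 : (A ^ p ^ k - 1) ^ p ^ k = 0 := by rw [frob, one_pow, h1, sub_self]
    have ha1 : A ^ p ^ k = 1 := by
      have := pow_eq_zero_iff hq0 |>.mp h2; linear_combination this
    exact hva (by rw [ha1, sub_self])
  refine ⟨hva, ?_⟩
  have key : ∀ a b : F, A * a * b = 1 → 1 - a ≠ 0 → 1 - b ≠ 0 →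
      (b * a - 1) / (1 - b) * ((a * A - 1) / (1 - a)) + (a * A - 1) / (1 - a) + 1 = 0 := by
    intro a b h h1 h2
    field_simp
    linear_combination (-1 + a) * h
  have hAq1 : A ^ (p ^ k + 1) = A ^ p ^ k * A := by rw [pow_add, pow_one]
  rw [hAq1, pow_succ, div_pow, frob, frob, one_pow, mul_pow]
  exact key _ _ hA hva hvb
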